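/- arXiv:1607.05824 — 3 statements merged into one kernel-verified Lean document; each statement's English description precedes it below -/
import Mathlib

section
/- Let β1 ∈ [0, π/2) and β2 ∈ (π/2, π], let α, x ∈ ℝ, and set λ = cos(α) - cos(β2)/cos(β1). Suppose cos(x) ≠ 0 is allowed to be arbitrary. Then there exist θ ∈ {0, π} and τ ≥ 0 such that cos(x) + τ·cos(β1 - θ) = 0 and cos(x + α) + τ·cos(β2 - θ) > 0 if and only if cos(x)·λ > sin(x)·sin(α). -/
open Real

theorem exists_theta_tau_iff (β1 β2 α x lam : ℝ)
    (hβ1 : β1 ∈ Set.Ico 0 (π / 2)) (hβ2 : β2 ∈ Set.Ioc (π / 2) π)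
    (hlam : lam = Real.cos α - Real.cos β2 / Real.cos β1) :
    (∃ θ ∈ ({0, π} : Set ℝ), ∃ τ : ℝ, 0 ≤ τ ∧
        Real.cos x + τ * Real.cos (β1 - θ) = 0 ∧
        0 < Real.cos (x + α) + τ * Real.cos (β2 - θ)) ↔
      Real.sin x * Real.sin α < Real.cos x * lam := by
  obtain ⟨hb1l, hb1u⟩ := hβ1
  obtain ⟨hb2l, hb2u⟩ := hβ2
  have hpi : (0:ℝ) < π := Real.pi_pos
  have hc1 : 0 < Real.cos β1 := by
    apply Real.cos_pos_of_mem_Ioo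
    constructor <;> [linarith; linarith]
  have hne : Real.cos β1 ≠ 0 := hc1.ne'
  have hc2 : Real.cos β2 < 0 := by
    apply Real.cos_neg_of_pi_div_two_lt_of_lt hb2l
    linarith
  have hlameq : Real.cos x * lam =
      (Real.cos x * Real.cos α * Real.cos β1 - Real.cos x * Real.cos β2) / Real.cos β1 := by
    rw [hlam]; field_simp
  have hgoal : (Real.sin x * Real.sin α < Real.cos x * lam) ↔
      Real.sin x * Real.sin α * Real.cos β1 <
        Real.cos x * Real.cos α * Real.cos β1 - Real.cos x * Real.cos β2 := by
    rw [hlameq, lt_div_iff₀ hc1]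
  rw [hgoal]
  constructor
  · rintro ⟨θ, hθ, τ, hτ, heq, hpos⟩
    rcases hθ with rfl | rfl
    · simp only [sub_zero] at heq hpos
      have hτc : τ * Real.cos β1 = -Real.cos x := by linarith
      rw [Real.cos_add] at hpos
      nlinarith [mul_pos hpos hc1]
    · rw [show β1 - π = -(π - β1) by ring, Real.cos_neg, Real.cos_pi_sub] at heq
      rw [show β2 - π = -(π - β2) by ring, Real.cos_neg, Real.cos_pi_sub] at hpos
      have hτc : τ * Real.cos β1 = Real.cos x := by linarith
      rw [Real.cos_add] at hpos
      nlinarith [mul_pos hpos hc1]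
  · intro h
    by_cases hx : Real.cos x ≤ 0
    · refine ⟨0, by simp, -Real.cos x / Real.cos β1,
        div_nonneg (by linarith) hc1.le, ?_, ?_⟩
      · simp only [sub_zero]; field_simp; ring
      · simp only [sub_zero]
        have hrw : Real.cos (x + α) + -Real.cos x / Real.cos β1 * Real.cos β2 =
            (Real.cos (x + α) * Real.cos β1 - Real.cos x * Real.cos β2) / Real.cos β1 := by
          field_simp; ring
        rw [hrw]
        apply div_pos _ hc1
        rw [Real.cos_add]
        nlinarith
    · push_neg at hx
      refine ⟨π, by simp, Real.cos x / Real.cos β1,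
        div_nonneg hx.le hc1.le, ?_, ?_⟩
      · rw [show β1 - π = -(π - β1) by ring, Real.cos_neg, Real.cos_pi_sub]
        field_simp; ring
      · rw [show β2 - π = -(π - β2) by ring, Real.cos_neg, Real.cos_pi_sub]
        have hrw : Real.cos (x + α) + Real.cos x / Real.cos β1 * -Real.cos β2 =
            (Real.cos (x + α) * Real.cos β1 - Real.cos x * Real.cos β2) / Real.cos β1 := by
          field_simp; ring
        rw [hrw]
        apply div_pos _ hc1
        rw [Real.cos_add]
        nlinarith
end

section
/- Let v1, v2, v3 ∈ ℝ² be affinely independent, and let t be a point in the interior of triangle v1v2v3. For any point t' ≠ t* where t* is also in the interior of the triangle, if t' lies in the sub-triangle with vertices v_i, v_j, t* (for some edge v_i v_j of the triangle, using the triangulation of the triangle from t*), then ‖t' − v_i‖ < ‖t* − v_i‖ or ‖t' − v_j‖ < ‖t* − v_j‖. -/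
open Real
open scoped RealInnerProductSpace

theorem closer_to_subtriangle_vertex
    (v1 v2 v3 : EuclideanSpace ℝ (Fin 2))
    (h : AffineIndependent ℝ ![v1, v2, v3])
    (t tstar t' : EuclideanSpace ℝ (Fin 2))
    (ht : t ∈ interior (convexHull ℝ ({v1, v2, v3} : Set (EuclideanSpace ℝ (Fin 2)))))
    (htstar : tstar ∈ interior (convexHull ℝ ({v1, v2, v3} : Set (EuclideanSpace ℝ (Fin 2)))))
    (hne : t' ≠ tstar)
    (vi vj : EuclideanSpace ℝ (Fin 2))
    (hvi : vi ∈ ({v1, v2, v3} : Set (EuclideanSpace ℝ (Fin 2))))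
    (hvj : vj ∈ ({v1, v2, v3} : Set (EuclideanSpace ℝ (Fin 2))))
    (hij : vi ≠ vj)
    (hsub : t' ∈ convexHull ℝ ({vi, vj, tstar} : Set (EuclideanSpace ℝ (Fin 2)))) :
    ‖t' - vi‖ < ‖tstar - vi‖ ∨ ‖t' - vj‖ < ‖tstar - vj‖ := by
  by_contra hcon
  push_neg at hcon
  obtain ⟨h1, h2⟩ := hcon
  have hs : ({vi, vj, tstar} : Set (EuclideanSpace ℝ (Fin 2)))
      = insert vi (insert vj {tstar}) := rfl
  rw [hs, convexHull_insert (by simp : (insert vj ({tstar} : Set (EuclideanSpace ℝ (Fin 2)))).Nonempty),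
      mem_convexJoin] at hsub
  obtain ⟨x, hx, z, hz, hseg⟩ := hsub
  rw [Set.mem_singleton_iff] at hx
  rw [hx] at hseg
  rw [convexHull_insert (by simp : ({tstar} : Set (EuclideanSpace ℝ (Fin 2))).Nonempty),
      mem_convexJoin] at hz
  obtain ⟨y, hy, w, hw, hzseg⟩ := hz
  rw [Set.mem_singleton_iff] at hy
  rw [convexHull_singleton, Set.mem_singleton_iff] at hw
  rw [hy, hw] at hzseg
  obtain ⟨θ1, θ2, hθ1, hθ2, hθ, hteq⟩ := hseg
  obtain ⟨μ1, μ2, hμ1, hμ2, hμ, hzeq⟩ := hzseg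
  have hμ2' : μ2 = 1 - μ1 := by linarith
  have hθ2' : θ2 = 1 - θ1 := by linarith
  subst hμ2' hθ2'
  set a := θ1 with ha
  set b := (1 - θ1) * μ1 with hb
  have hab : a + b ≤ 1 := by nlinarith
  have hbnn : 0 ≤ b := by positivity
  have hu : t' - tstar = a • (vi - tstar) + b • (vj - tstar) := by
    rw [← hteq, ← hzeq]
    module
  set u : EuclideanSpace ℝ (Fin 2) := t' - tstar with hudef
  set p : EuclideanSpace ℝ (Fin 2) := vi - tstar with hpdef
  set q : EuclideanSpace ℝ (Fin 2) := vj - tstar with hqdef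
  have hune : u ≠ 0 := sub_ne_zero.mpr hne
  have hupos : 0 < ‖u‖ ^ 2 := pow_pos (norm_pos_iff.mpr hune) 2
  have htp : t' - vi = u - p := by rw [hudef, hpdef]; abel
  have htq : t' - vj = u - q := by rw [hudef, hqdef]; abel
  have hnp : ‖tstar - vi‖ = ‖p‖ := by rw [hpdef, ← norm_neg]; congr 1; abel
  have hnq : ‖tstar - vj‖ = ‖q‖ := by rw [hqdef, ← norm_neg]; congr 1; abel
  rw [htp, hnp] at h1
  rw [htq, hnq] at h2
  have h1' : ‖p‖ ^ 2 ≤ ‖u - p‖ ^ 2 := pow_le_pow_left₀ (norm_nonneg p) h1 2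
  have h2' : ‖q‖ ^ 2 ≤ ‖u - q‖ ^ 2 := pow_le_pow_left₀ (norm_nonneg q) h2 2
  have e1 : ‖u - p‖ ^ 2 = ‖u‖ ^ 2 - 2 * (inner ℝ u p : ℝ) + ‖p‖ ^ 2 := norm_sub_sq_real u p
  have e2 : ‖u - q‖ ^ 2 = ‖u‖ ^ 2 - 2 * (inner ℝ u q : ℝ) + ‖q‖ ^ 2 := norm_sub_sq_real u q
  have hp2 : 2 * (inner ℝ u p : ℝ) ≤ ‖u‖ ^ 2 := by linarith
  have hq2 : 2 * (inner ℝ u q : ℝ) ≤ ‖u‖ ^ 2 := by linarith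
  have hinner : ‖u‖ ^ 2 = a * (inner ℝ u p : ℝ) + b * (inner ℝ u q : ℝ) := by
    rw [← real_inner_self_eq_norm_sq]
    nth_rewrite 2 [hu]
    rw [inner_add_right, real_inner_smul_right, real_inner_smul_right]
  linarith [mul_le_mul_of_nonneg_left hp2 hθ1, mul_le_mul_of_nonneg_left hq2 hbnn,
    mul_le_mul_of_nonneg_right hab hupos.le]
end

section
/- Let H be the convex hull of a finite set V ⊆ ℝ² with t* in the interior of H, and let t' ∈ interior(H), t' ≠ t*. Then there exists v ∈ V with ‖t' − v‖ < ‖t* − v‖. -/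
open Real

theorem closer_to_some_hull_vertex
    (V : Set (EuclideanSpace ℝ (Fin 2))) (hV : V.Finite)
    (tstar t' : EuclideanSpace ℝ (Fin 2))
    (htstar : tstar ∈ interior (convexHull ℝ V))
    (ht' : t' ∈ interior (convexHull ℝ V))
    (hne : t' ≠ tstar) :
    ∃ v ∈ V, ‖t' - v‖ < ‖tstar - v‖ := by
  by_contra hcon
  push_neg at hcon
  set d : EuclideanSpace ℝ (Fin 2) := tstar - t' with hd
  have hdne : d ≠ 0 := sub_ne_zero.mpr (Ne.symm hne)
  set c : ℝ := (‖tstar‖ ^ 2 - ‖t'‖ ^ 2) / 2 with hc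
  have hhalf : ∀ v ∈ V, c ≤ inner ℝ d v := by
    intro v hv
    have h1 : ‖tstar - v‖ ≤ ‖t' - v‖ := hcon v hv
    have h2 : ‖tstar - v‖ ^ 2 ≤ ‖t' - v‖ ^ 2 := by
      exact pow_le_pow_left₀ (norm_nonneg _) h1 2
    have e1 : ‖tstar - v‖ ^ 2 = ‖tstar‖ ^ 2 - 2 * inner ℝ tstar v + ‖v‖ ^ 2 :=
      norm_sub_sq_real tstar v
    have e2 : ‖t' - v‖ ^ 2 = ‖t'‖ ^ 2 - 2 * inner ℝ t' v + ‖v‖ ^ 2 :=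
      norm_sub_sq_real t' v
    have e3 : (inner ℝ d v : ℝ) = inner ℝ tstar v - inner ℝ t' v := by
      rw [hd, inner_sub_left]
    rw [e1, e2] at h2
    rw [e3, hc]
    linarith
  have hconv : Convex ℝ {x : EuclideanSpace ℝ (Fin 2) | c ≤ inner ℝ d x} := by
    refine convex_halfSpace_ge ⟨?_, ?_⟩ c
    · intro x y; exact inner_add_right d x y
    · intro a x; exact real_inner_smul_right d x a
  have hhull : convexHull ℝ V ⊆ {x : EuclideanSpace ℝ (Fin 2) | c ≤ inner ℝ d x} :=
    convexHull_min hhalf hconv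
  have ht'hull : t' ∈ convexHull ℝ V := interior_subset ht'
  have h4 : c ≤ inner ℝ d t' := hhull ht'hull
  have h5 : (inner ℝ d t' : ℝ) = inner ℝ tstar t' - ‖t'‖ ^ 2 := by
    rw [hd, inner_sub_left, real_inner_self_eq_norm_sq]
  have htt : tstar ∈ convexHull ℝ V := interior_subset htstar
  have h6 : c ≤ inner ℝ d tstar := hhull htt
  have h7 : (inner ℝ d tstar : ℝ) = ‖tstar‖ ^ 2 - inner ℝ t' tstar := by
    rw [hd, inner_sub_left, real_inner_self_eq_norm_sq]
  have hdd : (0:ℝ) < ‖d‖ ^ 2 := pow_pos (norm_pos_iff.mpr hdne) 2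
  have hdd2 : ‖d‖ ^ 2 = ‖tstar‖ ^ 2 - 2 * inner ℝ tstar t' + ‖t'‖ ^ 2 := norm_sub_sq_real tstar t'
  rw [h5, hc] at h4
  linarith
end
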